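/- C⁰ convergence of iterated involutes: under the iteration α_i(θ) = -½∫_θ^{θ+π} β_i[v,v']ds, β_{i+1}(θ) = ½∫_θ^{θ+π} α_i[u,u']ds, if ∫₀^π α_i²[u,u']dθ → 0 then the sup norms ‖β_{i+1}‖_∞ → 0 and ‖α_{i+1}‖_∞ → 0; in particular the sup norm bound ‖β_{i+1}‖_∞ ≤ ½√(A(u)·∫₀^π α_i²·(2/A(u))[u,u']dθ·A(u)) holds via the Cauchy–Schwarz inequality ∫₀^π|α_i|[u,u']dθ ≤ (A(u)∫₀^π α_i²[u,u']dθ)^{1/2} where A(u) = ∫₀^π[u,u']dθ. -/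

import Mathlib

open Real Filter MeasureTheory intervalIntegral

/-- Determinant of two plane vectors. -/
noncomputable def det2 (w₁ w₂ : ℝ × ℝ) : ℝ := w₁.1 * w₂.2 - w₁.2 * w₂.1

/-- Cauchy–Schwarz for continuous f against positive continuous weight D. -/
lemma cs_aux (f D : ℝ → ℝ) (hf : Continuous f) (hD : Continuous D)
    (hDpos : ∀ θ, 0 < D θ) :
    ∫ s in (0:ℝ)..π, |f s| * D s ≤
      Real.sqrt ((∫ s in (0:ℝ)..π, D s) * ∫ s in (0:ℝ)..π, (f s) ^ 2 * D s) := by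
  set A := ∫ s in (0:ℝ)..π, D s with hA'
  set I := ∫ s in (0:ℝ)..π, |f s| * D s with hI'
  set J := ∫ s in (0:ℝ)..π, (f s) ^ 2 * D s with hJ'
  have hiD : IntervalIntegrable D volume 0 π := hD.intervalIntegrable _ _
  have hifD : IntervalIntegrable (fun s => |f s| * D s) volume 0 π :=
    (hf.abs.mul hD).intervalIntegrable _ _
  have hif2D : IntervalIntegrable (fun s => (f s) ^ 2 * D s) volume 0 π :=
    ((hf.pow 2).mul hD).intervalIntegrable _ _
  have hA : 0 < A := intervalIntegral_pos_of_pos hiD hDpos pi_pos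
  have hI0 : 0 ≤ I := intervalIntegral.integral_nonneg pi_pos.le
    (fun x _ => mul_nonneg (abs_nonneg _) (hDpos x).le)
  set t := I / A with ht'
  have hnn : 0 ≤ ∫ s in (0:ℝ)..π, (t - |f s|) ^ 2 * D s :=
    intervalIntegral.integral_nonneg pi_pos.le
      (fun x _ => mul_nonneg (sq_nonneg _) (hDpos x).le)
  have hexp : ∀ s, (t - |f s|) ^ 2 * D s
      = t ^ 2 * D s - 2 * t * (|f s| * D s) + (f s) ^ 2 * D s := by
    intro s
    rw [← sq_abs (f s)]; ring
  have hval : (∫ s in (0:ℝ)..π, (t - |f s|) ^ 2 * D s)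
      = t ^ 2 * A - 2 * t * I + J := by
    rw [intervalIntegral.integral_congr (fun s _ => hexp s)]
    rw [intervalIntegral.integral_add (((hiD.const_mul _).sub (hifD.const_mul _))) hif2D,
      intervalIntegral.integral_sub (hiD.const_mul _) (hifD.const_mul _),
      intervalIntegral.integral_const_mul, intervalIntegral.integral_const_mul]
  have hkey : I ^ 2 ≤ A * J := by
    rw [hval] at hnn
    have hI : I = t * A := ((eq_div_iff hA.ne').mp ht').symm
    nlinarith [hnn, hA, sq_nonneg t]
  have hAJ : 0 ≤ A * J := le_trans (sq_nonneg I) hkey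
  exact (Real.le_sqrt hI0 hAJ).mpr hkey

/-- C⁰ convergence of iterated involutes: if ∫₀^π α_i²[u,u'] → 0 (and
∫₀^π β_i²[v,v'] → 0) then ‖β_{i+1}‖_∞ → 0 and ‖α_{i+1}‖_∞ → 0, with the
Cauchy–Schwarz sup-norm bound |β_{i+1}(θ)| ≤ ½√(A(u)·∫₀^π α_i²[u,u']) where
A(u) = ∫₀^π [u,u']. -/
theorem iterated_involutes_C0_convergence (u u' v v' : ℝ → ℝ × ℝ)
    (α β : ℕ → ℝ → ℝ)
    (hu : ∀ θ, HasDerivAt u (u' θ) θ)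
    (hv : ∀ θ, HasDerivAt v (v' θ) θ)
    (husym : ∀ θ, u (θ + π) = -u θ)
    (hvsym : ∀ θ, v (θ + π) = -v θ)
    (hudet : ∀ θ, 0 < det2 (u θ) (u' θ))
    (hvdet : ∀ θ, 0 < det2 (v θ) (v' θ))
    (hcontu : Continuous u) (hcontu' : Continuous u')
    (hcontv : Continuous v) (hcontv' : Continuous v')
    (hcontα : ∀ i, Continuous (α i)) (hcontβ : ∀ i, Continuous (β i))
    (hαanti : ∀ i θ, α i (θ + π) = -α i θ)
    (hβanti : ∀ i θ, β i (θ + π) = -β i θ)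
    (hrecα : ∀ i θ, α i θ
      = -(1/2 : ℝ) * ∫ s in θ..(θ + π), β i s * det2 (v s) (v' s))
    (hrecβ : ∀ i θ, β (i + 1) θ
      = (1/2 : ℝ) * ∫ s in θ..(θ + π), α i s * det2 (u s) (u' s))
    (hαto0 : Tendsto (fun i => ∫ θ in (0:ℝ)..π, (α i θ) ^ 2 * det2 (u θ) (u' θ))
      atTop (nhds 0))
    (hβto0 : Tendsto (fun i => ∫ θ in (0:ℝ)..π, (β i θ) ^ 2 * det2 (v θ) (v' θ))
      atTop (nhds 0)) :
    (∀ i θ, |β (i + 1) θ| ≤ (1/2 : ℝ) *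
        Real.sqrt ((∫ s in (0:ℝ)..π, det2 (u s) (u' s)) *
          ∫ s in (0:ℝ)..π, (α i s) ^ 2 * det2 (u s) (u' s))) ∧
    (∀ i, ∫ s in (0:ℝ)..π, |α i s| * det2 (u s) (u' s) ≤
        Real.sqrt ((∫ s in (0:ℝ)..π, det2 (u s) (u' s)) *
          ∫ s in (0:ℝ)..π, (α i s) ^ 2 * det2 (u s) (u' s))) ∧
    (∀ ε > (0:ℝ), ∃ N : ℕ, ∀ i ≥ N, ∀ θ : ℝ, |β (i + 1) θ| < ε) ∧
    (∀ ε > (0:ℝ), ∃ N : ℕ, ∀ i ≥ N, ∀ θ : ℝ, |α (i + 1) θ| < ε) := by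
  have hcontDu : Continuous (fun s => det2 (u s) (u' s)) := by
    unfold det2; fun_prop
  have hcontDv : Continuous (fun s => det2 (v s) (v' s)) := by
    unfold det2; fun_prop
  -- derivative is antiperiodic
  have hu'sym : ∀ θ, u' (θ + π) = -u' θ := by
    intro θ
    have h1 : HasDerivAt (fun x => u (x + π)) (u' (θ + π)) θ :=
      HasDerivAt.comp_add_const θ π (hu (θ + π))
    have heq : (fun x => u (x + π)) = fun x => -u x := funext husym
    rw [heq] at h1
    exact h1.unique (hu θ).neg
  have hv'sym : ∀ θ, v' (θ + π) = -v' θ := by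
    intro θ
    have h1 : HasDerivAt (fun x => v (x + π)) (v' (θ + π)) θ :=
      HasDerivAt.comp_add_const θ π (hv (θ + π))
    have heq : (fun x => v (x + π)) = fun x => -v x := funext hvsym
    rw [heq] at h1
    exact h1.unique (hv θ).neg
  have hDuper : Function.Periodic (fun s => det2 (u s) (u' s)) π := by
    intro θ; simp only [husym, hu'sym]; unfold det2; simp
  have hDvper : Function.Periodic (fun s => det2 (v s) (v' s)) π := by
    intro θ; simp only [hvsym, hv'sym]; unfold det2; simp
  set A := ∫ s in (0:ℝ)..π, det2 (u s) (u' s) with hA'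
  set Av := ∫ s in (0:ℝ)..π, det2 (v s) (v' s) with hAv'
  set J := fun i => ∫ s in (0:ℝ)..π, (α i s) ^ 2 * det2 (u s) (u' s) with hJ'
  -- Cauchy–Schwarz, part 2
  have part2 : ∀ i, ∫ s in (0:ℝ)..π, |α i s| * det2 (u s) (u' s) ≤
      Real.sqrt (A * J i) := fun i =>
    cs_aux (α i) (fun s => det2 (u s) (u' s)) (hcontα i) hcontDu hudet
  -- part 1: pointwise bound on β (i+1)
  have part1 : ∀ i θ, |β (i + 1) θ| ≤ (1/2 : ℝ) * Real.sqrt (A * J i) := by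
    intro i θ
    rw [hrecβ i θ, abs_mul]
    have hhalf : |(1/2 : ℝ)| = 1/2 := by norm_num
    rw [hhalf]
    have hle : θ ≤ θ + π := by linarith [pi_pos]
    have h2 : |∫ s in θ..(θ + π), α i s * det2 (u s) (u' s)|
        ≤ ∫ s in θ..(θ + π), |α i s * det2 (u s) (u' s)| :=
      intervalIntegral.abs_integral_le_integral_abs hle
    have h3 : (∫ s in θ..(θ + π), |α i s * det2 (u s) (u' s)|)
        = ∫ s in θ..(θ + π), |α i s| * det2 (u s) (u' s) := by
      apply intervalIntegral.integral_congr
      intro s _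
      show |α i s * det2 (u s) (u' s)| = |α i s| * det2 (u s) (u' s)
      rw [abs_mul, abs_of_pos (hudet s)]
    have hper : Function.Periodic (fun s => |α i s| * det2 (u s) (u' s)) π := by
      intro x
      simp only [hαanti, abs_neg]
      congr 1
      exact hDuper x
    have h4 : (∫ s in θ..(θ + π), |α i s| * det2 (u s) (u' s))
        = ∫ s in (0:ℝ)..π, |α i s| * det2 (u s) (u' s) := by
      have := hper.intervalIntegral_add_eq θ 0
      simpa using this
    calc (1/2 : ℝ) * |∫ s in θ..(θ + π), α i s * det2 (u s) (u' s)|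
        ≤ (1/2 : ℝ) * ∫ s in (0:ℝ)..π, |α i s| * det2 (u s) (u' s) := by
          rw [← h4, ← h3]; linarith [h2]
      _ ≤ (1/2 : ℝ) * Real.sqrt (A * J i) := by linarith [part2 i]
  -- the bound tends to 0
  have hb : Tendsto (fun i => (1/2 : ℝ) * Real.sqrt (A * J i)) atTop (nhds 0) := by
    have h1 : Tendsto (fun i => A * J i) atTop (nhds 0) := by
      simpa using hαto0.const_mul A
    have h2 : Tendsto (fun i => Real.sqrt (A * J i)) atTop (nhds 0) := by
      have := (Real.continuous_sqrt.tendsto 0).comp h1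
      simpa [Function.comp_def] using this
    simpa using h2.const_mul (1/2 : ℝ)
  have hbnn : ∀ i, 0 ≤ (1/2 : ℝ) * Real.sqrt (A * J i) := fun i => by positivity
  have part3 : ∀ ε > (0:ℝ), ∃ N : ℕ, ∀ i ≥ N, ∀ θ : ℝ, |β (i + 1) θ| < ε := by
    intro ε hε
    obtain ⟨N, hN⟩ := (Metric.tendsto_atTop.mp hb) ε hε
    refine ⟨N, fun i hi θ => ?_⟩
    have := hN i hi
    rw [Real.dist_eq, sub_zero, abs_of_nonneg (hbnn i)] at this
    exact lt_of_le_of_lt (part1 i θ) this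
  refine ⟨part1, part2, part3, ?_⟩
  -- part 4
  have hAv0 : 0 ≤ Av := intervalIntegral.integral_nonneg pi_pos.le
    (fun x _ => (hvdet x).le)
  have halpha : ∀ i θ, |α (i + 1) θ| ≤
      (1/2 : ℝ) * (((1/2 : ℝ) * Real.sqrt (A * J i)) * Av) := by
    intro i θ
    rw [hrecα (i + 1) θ, abs_mul]
    have hhalf : |(-(1/2) : ℝ)| = 1/2 := by norm_num
    rw [hhalf]
    have hle : θ ≤ θ + π := by linarith [pi_pos]
    have h2 : |∫ s in θ..(θ + π), β (i + 1) s * det2 (v s) (v' s)|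
        ≤ ∫ s in θ..(θ + π), |β (i + 1) s * det2 (v s) (v' s)| :=
      intervalIntegral.abs_integral_le_integral_abs hle
    have h3 : (∫ s in θ..(θ + π), |β (i + 1) s * det2 (v s) (v' s)|)
        ≤ ∫ s in θ..(θ + π), ((1/2 : ℝ) * Real.sqrt (A * J i)) * det2 (v s) (v' s) := by
      apply intervalIntegral.integral_mono_on hle
        (((hcontβ (i+1)).mul hcontDv).abs.intervalIntegrable _ _)
        ((continuous_const.mul hcontDv).intervalIntegrable _ _)
      intro s _
      simp only [Pi.mul_apply]
      rw [abs_mul, abs_of_pos (hvdet s)]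
      exact mul_le_mul_of_nonneg_right (part1 i s) (hvdet s).le
    have h4 : (∫ s in θ..(θ + π), ((1/2 : ℝ) * Real.sqrt (A * J i)) * det2 (v s) (v' s))
        = ((1/2 : ℝ) * Real.sqrt (A * J i)) * Av := by
      rw [intervalIntegral.integral_const_mul]
      congr 1
      have := hDvper.intervalIntegral_add_eq θ 0
      simpa using this
    have h5 := le_trans h2 h3
    rw [h4] at h5
    linarith
  have hb2 : Tendsto (fun i => (1/2 : ℝ) * (((1/2 : ℝ) * Real.sqrt (A * J i)) * Av))
      atTop (nhds 0) := by
    have := (hb.mul_const Av).const_mul (1/2 : ℝ)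
    simpa using this
  intro ε hε
  obtain ⟨N, hN⟩ := (Metric.tendsto_atTop.mp hb2) ε hε
  refine ⟨N, fun i hi θ => ?_⟩
  have h := hN i hi
  have hnn : 0 ≤ (1/2 : ℝ) * (((1/2 : ℝ) * Real.sqrt (A * J i)) * Av) := by positivity
  rw [Real.dist_eq, sub_zero, abs_of_nonneg hnn] at h
  exact lt_of_le_of_lt (halpha i θ) h
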